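/- Let Z be a Hermitian 3×3 complex matrix whose real part is positive definite. Then Z has at most one non-positive eigenvalue. -/

import Mathlib

open Matrix ComplexOrder

/-- A Hermitian 3×3 matrix whose (entrywise) real part is positive definite has at most
one non-positive eigenvalue. -/
theorem stmt3 (Z : Matrix (Fin 3) (Fin 3) ℂ) (hZ : Z.IsHermitian)
    (hre : (Matrix.of fun i j => (Z i j).re : Matrix (Fin 3) (Fin 3) ℝ).PosDef) :
    (Finset.univ.filter fun i => hZ.eigenvalues i ≤ 0).card ≤ 1 := by
  by_contra h
  push_neg at h
  obtain ⟨i, hi, j, hj, hij⟩ := Finset.one_lt_card.mp h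
  simp only [Finset.mem_filter] at hi hj
  have hli : hZ.eigenvalues i ≤ 0 := hi.2
  have hlj : hZ.eigenvalues j ≤ 0 := hj.2
  set v : Fin 3 → ℂ := ⇑(hZ.eigenvectorBasis i) with hvdef
  set w : Fin 3 → ℂ := ⇑(hZ.eigenvectorBasis j) with hwdef
  have horth := orthonormal_iff_ite.mp hZ.eigenvectorBasis.orthonormal
  have hvv : star v ⬝ᵥ v = 1 := by
    have := horth i i; rw [EuclideanSpace.inner_eq_star_dotProduct] at this; rw [dotProduct_comm]; simpa using this
  have hvw : star v ⬝ᵥ w = 0 := by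
    have := horth i j; rw [EuclideanSpace.inner_eq_star_dotProduct] at this; rw [dotProduct_comm]; simpa [hij] using this
  have hwv : star w ⬝ᵥ v = 0 := by
    have := horth j i; rw [EuclideanSpace.inner_eq_star_dotProduct] at this
    rw [dotProduct_comm]; simpa [hij.symm] using this
  have hww : star w ⬝ᵥ w = 1 := by
    have := horth j j; rw [EuclideanSpace.inner_eq_star_dotProduct] at this; rw [dotProduct_comm]; simpa using this
  -- a real vector in the span of v, w
  let f : (ℂ × ℂ) →ₗ[ℝ] (Fin 3 → ℝ) :=
    { toFun := fun p k => (p.1 * v k + p.2 * w k).im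
      map_add' := by intro p q; funext k; simp [add_mul]; ring
      map_smul' := by
        intro c p; funext k
        simp [Complex.real_smul, mul_assoc, ← mul_add, Complex.im_ofReal_mul]
      }
  have hker : LinearMap.ker f ≠ ⊥ := by
    apply LinearMap.ker_ne_bot_of_finrank_lt (K := ℝ)
    simp [Module.finrank_prod, Complex.finrank_real_complex]
  obtain ⟨p, hp, hp0⟩ := Submodule.exists_mem_ne_zero_of_ne_bot hker
  set α := p.1 with hα
  set β := p.2 with hβ
  set x : Fin 3 → ℂ := fun k => α * v k + β * w k with hxdef
  have hxim : ∀ k, (x k).im = 0 := fun k => congrFun (LinearMap.mem_ker.mp hp) k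
  set xr : Fin 3 → ℝ := fun k => (x k).re with hxrdef
  have hx' : x = fun k => ((xr k : ℝ) : ℂ) := by
    funext k; exact (Complex.ext rfl (by simp [hxim k]) : x k = ((x k).re : ℂ))
  -- x as a linear combination
  have hxcomb : x = α • v + β • w := by funext k; simp [hxdef, smul_eq_mul]
  -- x ≠ 0
  have hxne : x ≠ 0 := by
    intro h0
    apply hp0
    have ha : α = 0 := by
      have := congrArg (fun y => star v ⬝ᵥ y) h0
      simpa [hxcomb, dotProduct_add, dotProduct_smul, hvv, hvw, smul_eq_mul] using this
    have hb : β = 0 := by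
      have := congrArg (fun y => star w ⬝ᵥ y) h0
      simpa [hxcomb, dotProduct_add, dotProduct_smul, hwv, hww, smul_eq_mul] using this
    exact Prod.ext ha hb
  have hxrne : xr ≠ 0 := by
    intro h0
    apply hxne
    rw [hx', h0]
    funext k; simp
  -- value of the quadratic form via eigenvalues
  have hZx : Z *ᵥ x = ((hZ.eigenvalues i : ℂ) * α) • v + ((hZ.eigenvalues j : ℂ) * β) • w := by
    rw [hxcomb, mulVec_add, mulVec_smul, mulVec_smul, hvdef, hwdef,
      hZ.mulVec_eigenvectorBasis i, hZ.mulVec_eigenvectorBasis j]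
    funext k
    simp [Complex.real_smul]
    ring
  have hxstar : star x = (starRingEnd ℂ α) • star v + (starRingEnd ℂ β) • star w := by
    rw [hxcomb]; simp [star_smul]
  have hS : star x ⬝ᵥ (Z *ᵥ x) =
      (hZ.eigenvalues i : ℂ) * (starRingEnd ℂ α * α) + (hZ.eigenvalues j : ℂ) * (starRingEnd ℂ β * β) := by
    rw [hZx, hxstar]
    simp [add_dotProduct, dotProduct_add, smul_dotProduct, dotProduct_smul, hvv, hvw, hwv, hww,
      smul_eq_mul]
    ring
  have hconjα : starRingEnd ℂ α * α = (Complex.normSq α : ℂ) := by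
    rw [mul_comm, Complex.mul_conj]
  have hconjβ : starRingEnd ℂ β * β = (Complex.normSq β : ℂ) := by
    rw [mul_comm, Complex.mul_conj]
  have hSre_le : (star x ⬝ᵥ (Z *ᵥ x)).re ≤ 0 := by
    rw [hS, hconjα, hconjβ]
    simp only [← Complex.ofReal_mul, ← Complex.ofReal_add, Complex.ofReal_re]
    have h1 : hZ.eigenvalues i * Complex.normSq α ≤ 0 :=
      mul_nonpos_of_nonpos_of_nonneg hli (Complex.normSq_nonneg α)
    have h2 : hZ.eigenvalues j * Complex.normSq β ≤ 0 :=
      mul_nonpos_of_nonpos_of_nonneg hlj (Complex.normSq_nonneg β)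
    linarith
  -- real quadratic form
  have hSre_eq : (star x ⬝ᵥ (Z *ᵥ x)).re =
      xr ⬝ᵥ ((Matrix.of fun i j => (Z i j).re : Matrix (Fin 3) (Fin 3) ℝ) *ᵥ xr) := by
    rw [hx']
    simp only [dotProduct, mulVec, Pi.star_apply, Complex.re_sum, Finset.mul_sum]
    congr 1
    funext k
    congr 1
    funext l
    simp [Complex.re_ofReal_mul, Complex.mul_re]
  have hpos := hre.dotProduct_mulVec_pos hxrne
  simp only [star_trivial, RCLike.re_to_real] at hpos
  rw [hSre_eq] at hSre_le
  exact absurd hpos (not_lt.mpr hSre_le)
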